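/- Let (Ω, P) be a probability space, let E = ℝ^d be a finite-dimensional real inner product space, fix unit vectors u, v ∈ E and real angles θ_u, θ_v, and let W_u, W_v : Ω → E be random vectors satisfying, almost surely, ‖W_u‖ = 1, ‖W_v‖ = 1, ⟨W_u, u⟩ = 0, and ⟨W_v, v⟩ = 0, with E[W_u] = 0, E[W_v] = 0, and W_u independent of W_v. Define U = cos(θ_u)·u + sin(θ_u)·W_u and V = cos(θ_v)·v + sin(θ_v)·W_v. Then |E[⟨U, V⟩]| ≤ |⟨u, v⟩|, and the inequality is strict whenever ⟨u, v⟩ ≠ 0 and |cos(θ_u)·cos(θ_v)| < 1. -/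

import Mathlib

open MeasureTheory
open scoped RealInnerProductSpace

lemma coordAbsLe {d : ℕ} (x : EuclideanSpace ℝ (Fin d)) (i : Fin d) : |x i| ≤ ‖x‖ := by
  have h := abs_real_inner_le_norm (EuclideanSpace.single i (1:ℝ)) x
  simpa [EuclideanSpace.inner_single_left, EuclideanSpace.norm_single] using h

/-- Similarity decay: under zero-mean orthogonal rotational updates, the expected
cosine similarity cannot increase in magnitude across a Pre-Norm layer, and it
strictly decays whenever `⟪u, v⟫ ≠ 0` and `|cos θ_u · cos θ_v| < 1`. -/
theorem abs_expected_inner_update_le {d : ℕ} {Ω : Type*} [MeasurableSpace Ω]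
    (P : Measure Ω) [IsProbabilityMeasure P]
    (u v : EuclideanSpace ℝ (Fin d)) (hu : ‖u‖ = 1) (hv : ‖v‖ = 1)
    (θu θv : ℝ)
    (Wu Wv : Ω → EuclideanSpace ℝ (Fin d))
    (hWu_meas : Measurable Wu) (hWv_meas : Measurable Wv)
    (hWu_norm : ∀ᵐ ω ∂P, ‖Wu ω‖ = 1) (hWv_norm : ∀ᵐ ω ∂P, ‖Wv ω‖ = 1)
    (hWu_orth : ∀ᵐ ω ∂P, ⟪Wu ω, u⟫ = 0) (hWv_orth : ∀ᵐ ω ∂P, ⟪Wv ω, v⟫ = 0)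
    (hWu_mean : ∫ ω, Wu ω ∂P = 0) (hWv_mean : ∫ ω, Wv ω ∂P = 0)
    (hindep : ProbabilityTheory.IndepFun Wu Wv P) :
    |∫ ω, ⟪Real.cos θu • u + Real.sin θu • Wu ω,
           Real.cos θv • v + Real.sin θv • Wv ω⟫ ∂P| ≤ |⟪u, v⟫| ∧
    (⟪u, v⟫ ≠ 0 → |Real.cos θu * Real.cos θv| < 1 →
      |∫ ω, ⟪Real.cos θu • u + Real.sin θu • Wu ω,
             Real.cos θv • v + Real.sin θv • Wv ω⟫ ∂P| < |⟪u, v⟫|) := by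
  set a := Real.cos θu
  set b := Real.sin θu
  set c := Real.cos θv
  set e := Real.sin θv
  have hWu_int : Integrable Wu P :=
    ⟨hWu_meas.aestronglyMeasurable,
      HasFiniteIntegral.of_bounded (C := 1) (hWu_norm.mono fun ω h => le_of_eq h)⟩
  have hWv_int : Integrable Wv P :=
    ⟨hWv_meas.aestronglyMeasurable,
      HasFiniteIntegral.of_bounded (C := 1) (hWv_norm.mono fun ω h => le_of_eq h)⟩
  -- component means are zero
  have hcomp_u : ∀ i, ∫ ω, Wu ω i ∂P = 0 := by
    intro i
    have := (EuclideanSpace.proj i : EuclideanSpace ℝ (Fin d) →L[ℝ] ℝ).integral_comp_comm hWu_int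
    simpa [hWu_mean] using this
  have hcomp_v : ∀ i, ∫ ω, Wv ω i ∂P = 0 := by
    intro i
    have := (EuclideanSpace.proj i : EuclideanSpace ℝ (Fin d) →L[ℝ] ℝ).integral_comp_comm hWv_int
    simpa [hWv_mean] using this
  -- ∫ ⟪Wu, Wv⟫ = 0 by independence
  have hWW : ∫ ω, ⟪Wu ω, Wv ω⟫ ∂P = 0 := by
    have hrw : ∀ ω, ⟪Wu ω, Wv ω⟫ = ∑ i : Fin d, Wu ω i * Wv ω i := by
      intro ω; simp [PiLp.inner_apply, RCLike.inner_apply, mul_comm]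
    have hint : ∀ i : Fin d, Integrable (fun ω => Wu ω i * Wv ω i) P := by
      intro i
      refine ⟨(((measurable_pi_apply i).comp ((WithLp.measurable_ofLp _ _).comp hWu_meas)).mul ((measurable_pi_apply i).comp ((WithLp.measurable_ofLp _ _).comp hWv_meas))).aestronglyMeasurable, ?_⟩
      refine HasFiniteIntegral.of_bounded (C := 1) ?_
      filter_upwards [hWu_norm, hWv_norm] with ω h1 h2
      have hb1 : |Wu ω i| ≤ 1 := by
        calc |Wu ω i| ≤ ‖Wu ω‖ := coordAbsLe _ i
        _ = 1 := h1
      have hb2 : |Wv ω i| ≤ 1 := by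
        calc |Wv ω i| ≤ ‖Wv ω‖ := coordAbsLe _ i
        _ = 1 := h2
      calc ‖Wu ω i * Wv ω i‖ = |Wu ω i| * |Wv ω i| := abs_mul _ _
        _ ≤ 1 * 1 := mul_le_mul hb1 hb2 (abs_nonneg _) zero_le_one
        _ = 1 := one_mul 1
    calc ∫ ω, ⟪Wu ω, Wv ω⟫ ∂P = ∫ ω, ∑ i : Fin d, Wu ω i * Wv ω i ∂P := by
          exact integral_congr_ae (Filter.Eventually.of_forall hrw)
      _ = ∑ i : Fin d, ∫ ω, Wu ω i * Wv ω i ∂P := integral_finset_sum _ fun i _ => hint i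
      _ = 0 := by
          refine Finset.sum_eq_zero fun i _ => ?_
          have hind : ProbabilityTheory.IndepFun (fun ω => Wu ω i) (fun ω => Wv ω i) P :=
            hindep.comp ((measurable_pi_apply i).comp (WithLp.measurable_ofLp _ _))
              ((measurable_pi_apply i).comp (WithLp.measurable_ofLp _ _))
          have h := hind.integral_mul_eq_mul_integral ((measurable_pi_apply i).comp ((WithLp.measurable_ofLp _ _).comp hWu_meas)).aestronglyMeasurable
            ((measurable_pi_apply i).comp ((WithLp.measurable_ofLp _ _).comp hWv_meas)).aestronglyMeasurable
          rw [hcomp_u i, zero_mul] at h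
          exact h
  -- ∫ ⟪u, Wv⟫ = 0 and ∫ ⟪Wu, v⟫ = 0
  have huW : ∫ ω, ⟪u, Wv ω⟫ ∂P = 0 := by
    rw [integral_inner hWv_int, hWv_mean, inner_zero_right]
  have hWv' : ∫ ω, ⟪Wu ω, v⟫ ∂P = 0 := by
    have : ∫ ω, ⟪v, Wu ω⟫ ∂P = 0 := by
      rw [integral_inner hWu_int, hWu_mean, inner_zero_right]
    rw [← this]
    exact integral_congr_ae (Filter.Eventually.of_forall fun ω => real_inner_comm _ _)
  -- main integral computation
  have hkey : ∫ ω, ⟪a • u + b • Wu ω, c • v + e • Wv ω⟫ ∂P = a * c * ⟪u, v⟫ := by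
    have hrw : ∀ ω, ⟪a • u + b • Wu ω, c • v + e • Wv ω⟫
        = a * c * ⟪u, v⟫ + a * e * ⟪u, Wv ω⟫ + b * c * ⟪Wu ω, v⟫ + b * e * ⟪Wu ω, Wv ω⟫ := by
      intro ω
      simp only [inner_add_left, inner_add_right, real_inner_smul_left, real_inner_smul_right]
      ring
    have int2 : Integrable (fun ω => a * e * ⟪u, Wv ω⟫) P := by
      have h1 : Integrable (fun ω => a * e * ⟪Wv ω, u⟫) P :=
        (hWv_int.inner_const u).const_mul _
      refine h1.congr (Filter.Eventually.of_forall fun ω => ?_)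
      show a * e * ⟪Wv ω, u⟫ = a * e * ⟪u, Wv ω⟫
      rw [real_inner_comm]
    have int3 : Integrable (fun ω => b * c * ⟪Wu ω, v⟫) P :=
      (hWu_int.inner_const v).const_mul _
    have int4 : Integrable (fun ω => b * e * ⟪Wu ω, Wv ω⟫) P := by
      refine Integrable.const_mul ?_ _
      refine ⟨(hWu_meas.inner hWv_meas).aestronglyMeasurable, ?_⟩
      refine HasFiniteIntegral.of_bounded (C := 1) ?_
      filter_upwards [hWu_norm, hWv_norm] with ω h1 h2
      calc ‖⟪Wu ω, Wv ω⟫‖ ≤ ‖Wu ω‖ * ‖Wv ω‖ := norm_inner_le_norm _ _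
        _ = 1 := by rw [h1, h2, one_mul]
    rw [integral_congr_ae (Filter.Eventually.of_forall hrw)]
    have ic : Integrable (fun _ : Ω => a * c * ⟪u, v⟫) P := integrable_const _
    have e1 : ∫ ω, (a * c * ⟪u, v⟫ + a * e * ⟪u, Wv ω⟫ + b * c * ⟪Wu ω, v⟫)
          + b * e * ⟪Wu ω, Wv ω⟫ ∂P
        = (∫ ω, a * c * ⟪u, v⟫ + a * e * ⟪u, Wv ω⟫ + b * c * ⟪Wu ω, v⟫ ∂P)
          + ∫ ω, b * e * ⟪Wu ω, Wv ω⟫ ∂P :=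
      integral_add ((ic.add int2).add int3) int4
    have e2 : ∫ ω, (a * c * ⟪u, v⟫ + a * e * ⟪u, Wv ω⟫) + b * c * ⟪Wu ω, v⟫ ∂P
        = (∫ ω, a * c * ⟪u, v⟫ + a * e * ⟪u, Wv ω⟫ ∂P) + ∫ ω, b * c * ⟪Wu ω, v⟫ ∂P :=
      integral_add (ic.add int2) int3
    have e3 : ∫ ω, a * c * ⟪u, v⟫ + a * e * ⟪u, Wv ω⟫ ∂P
        = (∫ _ω, a * c * ⟪u, v⟫ ∂P) + ∫ ω, a * e * ⟪u, Wv ω⟫ ∂P :=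
      integral_add ic int2
    rw [e1, e2, e3, integral_const, integral_const_mul, integral_const_mul,
        integral_const_mul, huW, hWv', hWW]
    simp
  rw [hkey]
  have habs : |a * c * ⟪u, v⟫| = |a * c| * |⟪u, v⟫| := abs_mul _ _
  have hac : |a * c| ≤ 1 := by
    rw [abs_mul]
    exact mul_le_one₀ (Real.abs_cos_le_one θu) (abs_nonneg _) (Real.abs_cos_le_one θv)
  constructor
  · rw [habs]
    calc |a * c| * |⟪u, v⟫| ≤ 1 * |⟪u, v⟫| :=
          mul_le_mul_of_nonneg_right hac (abs_nonneg _)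
      _ = |⟪u, v⟫| := one_mul _
  · intro hne hlt
    rw [habs]
    have : |⟪u, v⟫| > 0 := abs_pos.mpr hne
    calc |a * c| * |⟪u, v⟫| < 1 * |⟪u, v⟫| := by
          exact mul_lt_mul_of_pos_right hlt this
      _ = |⟪u, v⟫| := one_mul _
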